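/- With Sₘ as computed by the SumsetScheduler recursion (S₀ = {0}, Sᵢ = {x ∈ S_{i−1} ⊕ 𝒮(Xᵢ) : x ≤ d⁽ⁱ⁾}), the minimum total processing time of tardy jobs over all schedules equals P − max(Sₘ), where P = Σⱼ pⱼ. -/

import Mathlib

/-- The set of all sub-multiset sums of a multiset of natural numbers. -/
def subsetSums (X : Multiset ℕ) : Set ℕ := {s | ∃ Y ≤ X, Y.sum = s}

/-- The SumsetScheduler recursion: `S₀ = {0}` and
`Sᵢ = {x ∈ S_{i−1} ⊕ 𝒮(Xᵢ) : x ≤ d⁽ⁱ⁾}`. -/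
def Srec (d : ℕ → ℕ) (X : ℕ → Multiset ℕ) : ℕ → Set ℕ
  | 0 => {0}
  | i + 1 => {x | (∃ a ∈ Srec d X i, ∃ b ∈ subsetSums (X (i + 1)), x = a + b) ∧
      x ≤ d (i + 1)}

/-- Completion time of job `j` in schedule `σ`. -/
def completion (n : ℕ) (p : Fin n → ℕ) (σ : Equiv.Perm (Fin n)) (j : Fin n) : ℕ :=
  ∑ i ∈ Finset.univ.filter (fun i => σ i ≤ σ j), p i

/-- The objective `Σ pⱼUⱼ`: total processing time of tardy jobs in `σ`, where job `j` has
due date `due j`. -/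
def cost (n : ℕ) (p due : Fin n → ℕ) (σ : Equiv.Perm (Fin n)) : ℕ :=
  ∑ j ∈ Finset.univ.filter (fun j => due j < completion n p σ j), p j

/-- Pull back a sub-multiset along `Multiset.map`. -/
lemma exists_le_map {α β : Type*} [DecidableEq α] [DecidableEq β] {f : α → β} {Y : Multiset β}
    {s : Multiset α} (h : Y ≤ s.map f) : ∃ t ≤ s, t.map f = Y := by
  induction Y using Multiset.induction generalizing s with
  | empty => exact ⟨0, Multiset.zero_le s, rfl⟩
  | cons b Y ih =>
    have hb : b ∈ s.map f := Multiset.mem_of_le h (Multiset.mem_cons_self b Y)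
    obtain ⟨a, ha, rfl⟩ := Multiset.mem_map.mp hb
    have h' : Y ≤ (s.erase a).map f := by
      rw [Multiset.map_erase_of_mem f s ha]
      have := Multiset.erase_le_erase (f a) h
      simpa using this
    obtain ⟨t, ht, htY⟩ := ih h'
    refine ⟨a ::ₘ t, ?_, by simp [htY]⟩
    calc a ::ₘ t ≤ a ::ₘ s.erase a := Multiset.cons_le_cons a ht
    _ = s := Multiset.cons_erase ha

/-- Characterization of the recursion sets in terms of job subsets. -/
lemma mem_Srec_iff (n : ℕ) (p : Fin n → ℕ) (d : ℕ → ℕ) (cls : Fin n → ℕ)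
    (hcls : ∀ j, 1 ≤ cls j) (X : ℕ → Multiset ℕ)
    (hX : ∀ i, X i = Multiset.map p (Finset.univ.filter (fun j => cls j = i)).val)
    (i : ℕ) (x : ℕ) :
    x ∈ Srec d X i ↔ ∃ A : Finset (Fin n), ((∀ j ∈ A, cls j ≤ i) ∧
      (∀ c, 1 ≤ c → c ≤ i → ∑ j ∈ A.filter (fun j => cls j ≤ c), p j ≤ d c)) ∧
      ∑ j ∈ A, p j = x := by
  induction i generalizing x with
  | zero =>
    simp only [Srec, Set.mem_singleton_iff]
    constructor
    · rintro rfl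
      exact ⟨∅, ⟨by simp, by omega⟩, by simp⟩
    · rintro ⟨A, ⟨h1, _⟩, rfl⟩
      have : A = ∅ := by
        apply Finset.eq_empty_of_forall_notMem
        intro j hj
        have := h1 j hj
        have := hcls j
        omega
      simp [this]
  | succ i ih =>
    constructor
    · rintro ⟨⟨a, ha, b, ⟨Y, hY, hYsum⟩, rfl⟩, hle⟩
      obtain ⟨A, ⟨hA1, hA2⟩, hA3⟩ := (ih a).mp ha
      rw [hX (i + 1)] at hY
      obtain ⟨t, ht, htY⟩ := exists_le_map hY
      have htn : t.Nodup := Multiset.nodup_of_le ht (Finset.nodup _)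
      set T : Finset (Fin n) := ⟨t, htn⟩ with hT
      have hTsub : T ⊆ Finset.univ.filter (fun j => cls j = i + 1) := Finset.val_le_iff.mp ht
      have hTcls : ∀ j ∈ T, cls j = i + 1 := by
        intro j hj
        simpa using hTsub hj
      have hTsum : ∑ j ∈ T, p j = b := by
        rw [← hYsum, ← htY]
        rfl
      have hdisj : Disjoint A T := by
        rw [Finset.disjoint_left]
        intro j hjA hjT
        have := hA1 j hjA
        have := hTcls j hjT
        omega
      refine ⟨A ∪ T, ⟨?_, ?_⟩, ?_⟩
      · intro j hj
        rcases Finset.mem_union.mp hj with h | h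
        · exact le_trans (hA1 j h) (Nat.le_succ i)
        · exact (hTcls j h).le
      · intro c hc1 hc2
        rcases Nat.lt_or_ge c (i + 1) with hci | hci
        · have : (A ∪ T).filter (fun j => cls j ≤ c) = A.filter (fun j => cls j ≤ c) := by
            rw [Finset.filter_union]
            have : T.filter (fun j => cls j ≤ c) = ∅ := by
              apply Finset.filter_eq_empty_iff.mpr
              intro j hj
              have := hTcls j hj
              omega
            rw [this, Finset.union_empty]
          rw [this]
          exact hA2 c hc1 (by omega)
        · have hc : c = i + 1 := by omega
          subst hc
          have : (A ∪ T).filter (fun j => cls j ≤ i + 1) = A ∪ T := by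
            apply Finset.filter_true_of_mem
            intro j hj
            rcases Finset.mem_union.mp hj with h | h
            · exact le_trans (hA1 j h) (Nat.le_succ i)
            · exact (hTcls j h).le
          rw [this, Finset.sum_union hdisj, hA3, hTsum]
          exact hle
      · rw [Finset.sum_union hdisj, hA3, hTsum]
    · rintro ⟨A, ⟨hA1, hA2⟩, rfl⟩
      set A₀ : Finset (Fin n) := A.filter (fun j => cls j ≤ i) with hA₀
      set T : Finset (Fin n) := A.filter (fun j => ¬ cls j ≤ i) with hTdef
      have hsplit : A₀ ∪ T = A := Finset.filter_union_filter_not_eq _ A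
      have hdisj : Disjoint A₀ T := Finset.disjoint_filter_filter_not A A _
      have hTcls : ∀ j ∈ T, cls j = i + 1 := by
        intro j hj
        rw [hTdef, Finset.mem_filter] at hj
        have := hA1 j hj.1
        omega
      have ha : (∑ j ∈ A₀, p j) ∈ Srec d X i := by
        apply (ih _).mpr
        refine ⟨A₀, ⟨?_, ?_⟩, rfl⟩
        · intro j hj
          rw [hA₀, Finset.mem_filter] at hj
          exact hj.2
        · intro c hc1 hc2
          have : A₀.filter (fun j => cls j ≤ c) = A.filter (fun j => cls j ≤ c) := by
            rw [hA₀, Finset.filter_filter]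
            apply Finset.filter_congr
            intro j _
            constructor
            · rintro ⟨_, h⟩
              simpa using h
            · intro h
              omega
          rw [this]
          exact hA2 c hc1 (by omega)
      have hb : (∑ j ∈ T, p j) ∈ subsetSums (X (i + 1)) := by
        refine ⟨T.val.map p, ?_, rfl⟩
        rw [hX (i + 1)]
        apply Multiset.map_le_map
        apply Finset.val_le_iff.mpr
        intro j hj
        simp [hTcls j hj]
      have hsum : ∑ j ∈ A, p j = (∑ j ∈ A₀, p j) + (∑ j ∈ T, p j) := by
        rw [← hsplit, Finset.sum_union hdisj]
      refine ⟨⟨_, ha, _, hb, hsum⟩, ?_⟩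
      have : A.filter (fun j => cls j ≤ i + 1) = A := by
        apply Finset.filter_true_of_mem
        exact hA1
      have h := hA2 (i + 1) (by omega) (le_refl _)
      rw [this] at h
      exact h

/-- The minimum total processing time of tardy jobs over all schedules equals
`P − max(Sₘ)`, where `Sₘ` is computed by the SumsetScheduler recursion. Job `j` has class
`cls j ∈ {1,…,m}`, due date `d (cls j)`, the `d` values are strictly increasing on
`{1,…,m}`, every class occurs, and `Xᵢ` is the multiset of processing times of class-`i`
jobs. -/
theorem sumsetScheduler_correct (n m : ℕ) (p : Fin n → ℕ) (d : ℕ → ℕ)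
    (hd : StrictMonoOn d (Set.Icc 1 m))
    (cls : Fin n → ℕ) (hcls : ∀ j, cls j ∈ Set.Icc 1 m)
    (hsurj : ∀ i ∈ Set.Icc 1 m, ∃ j, cls j = i)
    (X : ℕ → Multiset ℕ)
    (hX : ∀ i, X i = Multiset.map p (Finset.univ.filter (fun j => cls j = i)).val) :
    IsLeast {c | ∃ σ : Equiv.Perm (Fin n), c = cost n p (fun j => d (cls j)) σ}
      ((∑ j, p j) - sSup (Srec d X m)) := by
  have hcls1 : ∀ j, 1 ≤ cls j := fun j => (hcls j).1
  have hclsm : ∀ j, cls j ≤ m := fun j => (hcls j).2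
  set P := ∑ j, p j with hP
  set S := Srec d X m with hS
  have char := mem_Srec_iff n p d cls hcls1 X hX m
  -- 0 ∈ S
  have h0 : ∀ i, 0 ∈ Srec d X i := by
    intro i
    induction i with
    | zero => rfl
    | succ i ih => exact ⟨⟨0, ih, 0, ⟨0, Multiset.zero_le _, rfl⟩, rfl⟩, Nat.zero_le _⟩
  have hbdd : BddAbove S := by
    rw [hS]
    cases m with
    | zero => exact ⟨0, by rintro x rfl; rfl⟩
    | succ i => exact ⟨d (i + 1), fun x hx => hx.2⟩
  have hsup_mem : sSup S ∈ S := Nat.sSup_mem ⟨0, h0 m⟩ hbdd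
  -- the on-time sum of any schedule is in S
  have hOmem : ∀ σ : Equiv.Perm (Fin n),
      (∑ j ∈ Finset.univ.filter (fun j => ¬ d (cls j) < completion n p σ j), p j) ∈ S := by
    intro σ
    apply (char _).mpr
    set O := Finset.univ.filter (fun j => ¬ d (cls j) < completion n p σ j) with hO
    refine ⟨O, ⟨fun j _ => hclsm j, ?_⟩, rfl⟩
    intro c hc1 hc2
    set B := O.filter (fun j => cls j ≤ c) with hB
    rcases Finset.eq_empty_or_nonempty B with he | hne
    · simp [← hB, he]
    · obtain ⟨j₀, hj₀, hmax⟩ := Finset.exists_max_image B (fun j => σ j) hne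
      have hj₀O : j₀ ∈ O := (Finset.mem_filter.mp hj₀).1
      have hj₀c : cls j₀ ≤ c := (Finset.mem_filter.mp hj₀).2
      have h1 : ∑ j ∈ B, p j ≤ completion n p σ j₀ := by
        apply Finset.sum_le_sum_of_subset
        intro j hj
        simp only [Finset.mem_filter, Finset.mem_univ, true_and]
        exact hmax j hj
      have h2 : completion n p σ j₀ ≤ d (cls j₀) := by
        have := (Finset.mem_filter.mp hj₀O).2
        omega
      have h3 : d (cls j₀) ≤ d c :=
        hd.monotoneOn ⟨hcls1 j₀, le_trans hj₀c hc2⟩ ⟨hc1, hc2⟩ hj₀c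
      omega
  -- cost + on-time sum = P
  have hOsum : ∀ σ : Equiv.Perm (Fin n),
      cost n p (fun j => d (cls j)) σ +
        ∑ j ∈ Finset.univ.filter (fun j => ¬ d (cls j) < completion n p σ j), p j = P := by
    intro σ
    rw [hP, cost]
    exact Finset.sum_filter_add_sum_filter_not _ _ _
  constructor
  · -- membership: build an optimal schedule
    obtain ⟨A, ⟨hA1, hA2⟩, hA3⟩ := (char _).mp hsup_mem
    classical
    set f : Fin n → ℕ ×ₗ (Fin n) := fun j => toLex (if j ∈ A then cls j else m + 1, j) with hf
    set σ : Equiv.Perm (Fin n) := (Tuple.sort f)⁻¹ with hσ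
    have hmono : ∀ i j : Fin n, σ i ≤ σ j → f i ≤ f j := by
      intro i j h
      have h2 := Tuple.monotone_sort f h
      simpa [Function.comp, hσ, Equiv.apply_symm_apply] using h2
    -- every job of A is on time
    have hontime : ∀ j ∈ A, completion n p σ j ≤ d (cls j) := by
      intro j hj
      have hsub : Finset.univ.filter (fun i => σ i ≤ σ j) ⊆
          A.filter (fun i => cls i ≤ cls j) := by
        intro i hi
        have hle : f i ≤ f j := hmono i j (by simpa using hi)
        rw [hf, Prod.Lex.le_iff] at hle
        simp only [if_pos hj] at hle
        by_cases hiA : i ∈ A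
        · simp only [if_pos hiA] at hle
          rw [Finset.mem_filter]
          refine ⟨hiA, ?_⟩
          rcases hle with h | ⟨h, _⟩
          · exact h.le
          · exact h.le
        · simp only [if_neg hiA, ofLex_toLex] at hle
          have := hclsm j
          rcases hle with h | ⟨h, _⟩ <;> omega
      calc completion n p σ j ≤ ∑ i ∈ A.filter (fun i => cls i ≤ cls j), p i :=
            Finset.sum_le_sum_of_subset hsub
        _ ≤ d (cls j) := hA2 (cls j) (hcls1 j) (hclsm j)
    refine ⟨σ, ?_⟩
    have hsub : A ⊆ Finset.univ.filter (fun j => ¬ d (cls j) < completion n p σ j) := by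
      intro j hj
      simp only [Finset.mem_filter, Finset.mem_univ, true_and, not_lt]
      exact hontime j hj
    have hge : sSup S ≤ ∑ j ∈ Finset.univ.filter
        (fun j => ¬ d (cls j) < completion n p σ j), p j := by
      rw [← hA3]
      exact Finset.sum_le_sum_of_subset hsub
    have hle : (∑ j ∈ Finset.univ.filter
        (fun j => ¬ d (cls j) < completion n p σ j), p j) ≤ sSup S :=
      le_csSup hbdd (hOmem σ)
    have := hOsum σ
    omega
  · -- lower bound
    rintro c ⟨σ, rfl⟩
    have hle : (∑ j ∈ Finset.univ.filter
        (fun j => ¬ d (cls j) < completion n p σ j), p j) ≤ sSup S :=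
      le_csSup hbdd (hOmem σ)
    have := hOsum σ
    omega
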